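/- Let Δ₅ ⊂ ℝ² be the triangle with vertices (0,0), (4,4√3), (0,4√3), and μ the measure with density x(−3x/2+√3y/2)(−x/2+√3y/2)(x/2+√3y/2)(3x/2+√3y/2)(√3 y) on Δ₅. Then μ(Δ₅) = 29952·√3. -/

import Mathlib

open MeasureTheory Real

noncomputable def dens (p : ℝ × ℝ) : ℝ :=
  p.1 * (-3 * p.1 / 2 + Real.sqrt 3 * p.2 / 2) * (-p.1 / 2 + Real.sqrt 3 * p.2 / 2) * (p.1 / 2 + Real.sqrt 3 * p.2 / 2) * (3 * p.1 / 2 + Real.sqrt 3 * p.2 / 2) * (Real.sqrt 3 * p.2)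

noncomputable def TT : Set (ℝ × ℝ) :=
  {p | 0 ≤ p.1 ∧ Real.sqrt 3 * p.1 ≤ p.2 ∧ p.2 ≤ 4 * Real.sqrt 3}

/-- inner integral value (raw, no use of (√3)²=3) -/
noncomputable def Pf (x : ℝ) : ℝ :=
  (Real.sqrt 3 * x / 16) * ((3/2)*(4*Real.sqrt 3)^6 - (15/2)*x^2*(4*Real.sqrt 3)^4 + (9/2)*x^4*(4*Real.sqrt 3)^2)
  - (Real.sqrt 3 * x / 16) * ((3/2)*(Real.sqrt 3 * x)^6 - (15/2)*x^2*(Real.sqrt 3 * x)^4 + (9/2)*x^4*(Real.sqrt 3 * x)^2)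

lemma s3_pos : (0:ℝ) < Real.sqrt 3 := Real.sqrt_pos.2 (by norm_num)

lemma s3_sq : Real.sqrt 3 ^ 2 = 3 := Real.sq_sqrt (by norm_num)

lemma continuous_dens : Continuous dens := by
  unfold dens; fun_prop

lemma hull_eq :
    (convexHull ℝ {((0:ℝ), (0:ℝ)), (4, 4 * Real.sqrt 3), (0, 4 * Real.sqrt 3)} : Set (ℝ × ℝ)) = TT := by
  have hs : (0:ℝ) < Real.sqrt 3 := s3_pos
  apply le_antisymm
  · apply convexHull_min
    · intro p hp
      simp only [Set.mem_insert_iff, Set.mem_singleton_iff] at hp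
      rcases hp with h | h | h <;> subst h
      · exact ⟨le_refl 0, by simp, by positivity⟩
      · exact ⟨by norm_num, le_of_eq (mul_comm _ _), le_refl _⟩
      · exact ⟨le_refl 0, by simp, le_refl _⟩
    · intro p hp q hq a b ha hb hab
      obtain ⟨hp1, hp2, hp3⟩ := hp
      obtain ⟨hq1, hq2, hq3⟩ := hq
      refine ⟨?_, ?_, ?_⟩ <;>
        simp only [Prod.fst_add, Prod.snd_add, Prod.smul_fst, Prod.smul_snd, smul_eq_mul]
      · positivity
      · nlinarith [mul_le_mul_of_nonneg_left hp2 ha, mul_le_mul_of_nonneg_left hq2 hb]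
      · nlinarith [mul_le_mul_of_nonneg_left hp3 ha, mul_le_mul_of_nonneg_left hq3 hb]
  · intro p hp
    obtain ⟨hx0, hxy, hy⟩ := hp
    have h4s : (0:ℝ) < 4 * Real.sqrt 3 := by positivity
    have ha : 0 ≤ 1 - p.2 / (4 * Real.sqrt 3) := by
      have : p.2 / (4 * Real.sqrt 3) ≤ 1 := (div_le_one h4s).2 hy
      linarith
    have hb : 0 ≤ p.1 / 4 := by positivity
    have hc : 0 ≤ p.2 / (4 * Real.sqrt 3) - p.1 / 4 := by
      rw [sub_nonneg, div_le_div_iff₀ (by norm_num) h4s]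
      nlinarith
    have key : p = (1 - p.2 / (4 * Real.sqrt 3)) • ((0:ℝ), (0:ℝ))
        + (p.1 / 4) • ((4:ℝ), 4 * Real.sqrt 3)
        + (p.2 / (4 * Real.sqrt 3) - p.1 / 4) • ((0:ℝ), 4 * Real.sqrt 3) := by
      have hsne : Real.sqrt 3 ≠ 0 := ne_of_gt hs
      apply Prod.ext
      · simp [Prod.fst_add, smul_eq_mul]
      · simp only [Prod.snd_add, Prod.smul_snd, smul_eq_mul]
        field_simp
        ring
    have hconv := convex_convexHull ℝ
      ({((0:ℝ), (0:ℝ)), (4, 4 * Real.sqrt 3), (0, 4 * Real.sqrt 3)} : Set (ℝ × ℝ))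
    have hmem2 := hconv.sum_mem (t := (Finset.univ : Finset (Fin 3)))
      (w := ![1 - p.2 / (4 * Real.sqrt 3), p.1 / 4, p.2 / (4 * Real.sqrt 3) - p.1 / 4])
      (z := ![((0:ℝ), (0:ℝ)), (4, 4 * Real.sqrt 3), (0, 4 * Real.sqrt 3)])
      (by
        intro i _
        fin_cases i
        · simpa using ha
        · simpa using hb
        · simpa using hc)
      (by simp [Fin.sum_univ_three])
      (by
        intro i _
        fin_cases i
        · exact subset_convexHull ℝ _ (by simp)
        · exact subset_convexHull ℝ _ (by simp)
        · exact subset_convexHull ℝ _ (by simp))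
    rw [key]
    simpa [Fin.sum_univ_three] using hmem2

noncomputable def GG (x : ℝ) : ℝ :=
  (Real.sqrt 3 / 16) * ((3/2)*(4*Real.sqrt 3)^6*(x^2/2) - (15/2)*(4*Real.sqrt 3)^4*(x^4/4)
    + (9/2)*(4*Real.sqrt 3)^2*(x^6/6)
    - (3/2)*(Real.sqrt 3)^6*(x^8/8) + (15/2)*(Real.sqrt 3)^4*(x^8/8) - (9/2)*(Real.sqrt 3)^2*(x^8/8))

lemma continuous_Pf : Continuous Pf := by unfold Pf; fun_prop

lemma GG_deriv (x : ℝ) : HasDerivAt GG (Pf x) x := by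
  have h1 := (hasDerivAt_pow 2 x).const_mul ((3/2)*(4*Real.sqrt 3)^6/2)
  have h2 := (hasDerivAt_pow 4 x).const_mul ((15/2)*(4*Real.sqrt 3)^4/4)
  have h3 := (hasDerivAt_pow 6 x).const_mul ((9/2)*(4*Real.sqrt 3)^2/6)
  have h4 := (hasDerivAt_pow 8 x).const_mul
    ((-(3/2)*(Real.sqrt 3)^6 + (15/2)*(Real.sqrt 3)^4 - (9/2)*(Real.sqrt 3)^2)/8)
  have h := (((h1.sub h2).add h3).add h4).const_mul (Real.sqrt 3/16)
  refine (h.congr_of_eventuallyEq (Filter.Eventually.of_forall fun z => ?_)).congr_deriv (Eq.symm ?_)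
  · simp only [GG, Pi.add_apply, Pi.sub_apply]; ring
  · unfold Pf; push_cast; ring

theorem stmt : ∫ p in (convexHull ℝ {((0:ℝ), (0:ℝ)), (4, 4 * Real.sqrt 3), (0, 4 * Real.sqrt 3)} : Set (ℝ × ℝ)), dens p ∂volume = 29952 * Real.sqrt 3 := by
  have hs : (0:ℝ) < Real.sqrt 3 := s3_pos
  have hs2 : Real.sqrt 3 ^ 2 = 3 := s3_sq
  rw [hull_eq]
  have hTcomp : IsCompact TT := by
    rw [← hull_eq]
    exact Set.Finite.isCompact_convexHull ℝ (by simp)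
  have hTm : MeasurableSet TT := hTcomp.isClosed.measurableSet
  have hInt : IntegrableOn dens TT volume :=
    continuous_dens.continuousOn.integrableOn_compact hTcomp
  have hIndInt : Integrable (TT.indicator dens) (volume : Measure (ℝ × ℝ)) :=
    (integrable_indicator_iff hTm).2 hInt
  rw [← integral_indicator hTm, Measure.volume_eq_prod,
    integral_prod _ (by rw [← Measure.volume_eq_prod]; exact hIndInt)]
  have hinner : (fun x => ∫ y, TT.indicator dens (x, y)) = (Set.Icc (0:ℝ) 4).indicator Pf := by
    funext x
    by_cases hx0 : 0 ≤ x
    · by_cases hx4 : x ≤ 4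
      · rw [Set.indicator_of_mem (Set.mem_Icc.2 ⟨hx0, hx4⟩)]
        have hfe : (fun y => TT.indicator dens (x, y))
            = (Set.Icc (Real.sqrt 3 * x) (4 * Real.sqrt 3)).indicator (fun y => dens (x, y)) := by
          funext y
          by_cases hy : y ∈ Set.Icc (Real.sqrt 3 * x) (4 * Real.sqrt 3)
          · rw [Set.indicator_of_mem hy, Set.indicator_of_mem]
            exact ⟨hx0, hy.1, hy.2⟩
          · rw [Set.indicator_of_notMem hy, Set.indicator_of_notMem]
            intro hmem
            exact hy ⟨hmem.2.1, hmem.2.2⟩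
        rw [hfe, integral_indicator measurableSet_Icc]
        have hle : Real.sqrt 3 * x ≤ 4 * Real.sqrt 3 := by nlinarith
        rw [integral_Icc_eq_integral_Ioc, ← intervalIntegral.integral_of_le hle]
        have hderiv : ∀ y ∈ Set.uIcc (Real.sqrt 3 * x) (4 * Real.sqrt 3),
            HasDerivAt (fun y => (Real.sqrt 3 * x / 16) *
              ((3/2)*y^6 - (15/2)*x^2*y^4 + (9/2)*x^4*y^2)) (dens (x, y)) y := by
          intro y _
          have h := ((((hasDerivAt_pow 6 y).const_mul ((3:ℝ)/2)).sub
            ((hasDerivAt_pow 4 y).const_mul ((15/2)*x^2))).add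
            ((hasDerivAt_pow 2 y).const_mul ((9/2)*x^4))).const_mul (Real.sqrt 3 * x / 16)
          refine h.congr_deriv (Eq.symm ?_)
          simp only [dens]
          push_cast
          linear_combination (((Real.sqrt 3)^2+3)*y^4 - 10*x^2*y^2) * (x*(Real.sqrt 3)*y/16) * hs2
        rw [intervalIntegral.integral_eq_sub_of_hasDerivAt hderiv
          ((continuous_dens.comp (Continuous.prodMk_right x)).intervalIntegrable _ _)]
        unfold Pf
        ring
      · rw [Set.indicator_of_notMem (fun hmem => hx4 hmem.2)]
        have hz : (fun y => TT.indicator dens (x, y)) = fun _ => (0:ℝ) := by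
          funext y
          apply Set.indicator_of_notMem
          intro hmem
          obtain ⟨h1, h2, h3⟩ := hmem
          have hx4' : 4 < x := lt_of_not_ge hx4
          nlinarith
        rw [hz, integral_zero]
    · rw [Set.indicator_of_notMem (fun hmem => hx0 hmem.1)]
      have hz : (fun y => TT.indicator dens (x, y)) = fun _ => (0:ℝ) := by
        funext y
        apply Set.indicator_of_notMem
        intro hmem
        exact hx0 hmem.1
      rw [hz, integral_zero]
  rw [hinner, integral_indicator measurableSet_Icc, integral_Icc_eq_integral_Ioc,
    ← intervalIntegral.integral_of_le (by norm_num : (0:ℝ) ≤ 4)]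
  rw [intervalIntegral.integral_eq_sub_of_hasDerivAt
    (fun x _ => GG_deriv x) (continuous_Pf.intervalIntegrable _ _)]
  unfold GG
  linear_combination (Real.sqrt 3 * (2304*(Real.sqrt 3)^4 + 3072*(Real.sqrt 3)^2 + 9984)) * hs2
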